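/- Let $(X,q)$ be a mobi space over a mobi algebra $A$. If $q(x,a,y)=q(x,b,y)$ then $q(x,p(a,t,b),y)=q(x,a,y)$ for all $t\in A$. -/
import Mathlib

structure MobiAlgebra (A : Type*) where
  p : A → A → A → A
  zero : A
  half : A
  one : A
  A1 : p one half zero = half
  A2 : ∀ a, p zero a one = a
  A3 : ∀ a b, p a b a = a
  A4 : ∀ a b, p a zero b = a
  A5 : ∀ a b, p a one b = b
  A6 : ∀ a b₁ b₂, p a half b₁ = p a half b₂ → b₁ = b₂
  A7 : ∀ a b c₁ c₂ c₃, p a (p c₁ c₂ c₃) b = p (p a c₁ b) c₂ (p a c₃ b)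
  A8 : ∀ a₁ a₂ b₁ b₂ c,
    p (p a₁ c b₁) half (p a₂ c b₂) = p (p a₁ half a₂) c (p b₁ half b₂)

structure MobiSpace {A : Type*} (M : MobiAlgebra A) (X : Type*) where
  q : X → A → X → X
  X1 : ∀ x y, q x M.zero y = x
  X2 : ∀ x y, q x M.one y = y
  X3 : ∀ x a, q x a x = x
  X4 : ∀ x y₁ y₂, q x M.half y₁ = q x M.half y₂ → y₁ = y₂
  X5 : ∀ x y a b c, q (q x a y) b (q x c y) = q x (M.p a b c) y

theorem q_eq_interp {A X : Type*} (M : MobiAlgebra A) (S : MobiSpace M X)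
    (x y : X) (a b : A) (h : S.q x a y = S.q x b y) :
    ∀ t : A, S.q x (M.p a t b) y = S.q x a y := by
  intro t
  rw [← S.X5, ← h, S.X3]
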